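/- Suppose ‖f‖_r ≤ C_S(‖∇f‖₂ + ‖f‖₂)^θ ‖f‖_s^{1-θ} holds for all f ∈ H¹(Ω) ∩ Lˢ(Ω), with 0 < s ≤ 2 and θ ∈ (0,1). Then there exists a constant C_S' > 0 (depending only on C_S, s, θ) such that ‖f‖_r ≤ C_S'(‖∇f‖₂ + ‖f‖_s)^θ ‖f‖_s^{1-θ} for all f ∈ H¹(Ω) ∩ Lˢ(Ω). -/

import Mathlib

open Real Set MeasureTheory

noncomputable def lpNormOn {N : ℕ} (Ω : Set (EuclideanSpace ℝ (Fin N))) (p : ℝ)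
    (f : EuclideanSpace ℝ (Fin N) → ℝ) : ℝ :=
  (∫ x in Ω, |f x| ^ p) ^ (1 / p)

noncomputable def gradNormOn {N : ℕ} (Ω : Set (EuclideanSpace ℝ (Fin N)))
    (f : EuclideanSpace ℝ (Fin N) → ℝ) : ℝ :=
  (∫ x in Ω, ‖fderiv ℝ f x‖ ^ (2:ℝ)) ^ ((1:ℝ) / 2)

/-- Membership in (our model of) `H¹(Ω) ∩ Lˢ(Ω)`. -/
def MemH1LsOn {N : ℕ} (Ω : Set (EuclideanSpace ℝ (Fin N))) (s : ℝ)
    (f : EuclideanSpace ℝ (Fin N) → ℝ) : Prop :=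
  Differentiable ℝ f ∧ IntegrableOn f Ω volume ∧
    IntegrableOn (fun x => (f x) ^ (2:ℝ)) Ω volume ∧
    IntegrableOn (fun x => ‖fderiv ℝ f x‖ ^ (2:ℝ)) Ω volume ∧
    IntegrableOn (fun x => |f x| ^ s) Ω volume

lemma rpow_add_le_add_rpow_real {a b p : ℝ} (ha : 0 ≤ a) (hb : 0 ≤ b)
    (hp : 0 ≤ p) (hp1 : p ≤ 1) : (a + b) ^ p ≤ a ^ p + b ^ p := by
  lift a to NNReal using ha
  lift b to NNReal using hb
  rw [← NNReal.coe_add, ← NNReal.coe_rpow, ← NNReal.coe_rpow, ← NNReal.coe_rpow,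
    ← NNReal.coe_add, NNReal.coe_le_coe]
  exact NNReal.rpow_add_le_add_rpow a b hp hp1

lemma interp_aux {α : Type*} [MeasurableSpace α] {μ : Measure α} {g : α → ℝ}
    (hg0 : ∀ x, 0 ≤ g x) {s r : ℝ} (hs0 : 0 < s) (hs2 : s ≤ 2) (hr : 2 ≤ r)
    (hIs : Integrable (fun x => g x ^ s) μ) (hIr : Integrable (fun x => g x ^ r) μ)
    (hI2 : Integrable (fun x => g x ^ (2:ℝ)) μ) :
    (∫ x, g x ^ (2:ℝ) ∂μ) ^ (1/(2:ℝ)) ≤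
      (∫ x, g x ^ s ∂μ) ^ (1/s) + (∫ x, g x ^ r ∂μ) ^ (1/r) := by
  have hIs0 : 0 ≤ ∫ x, g x ^ s ∂μ := integral_nonneg fun x => Real.rpow_nonneg (hg0 x) _
  have hIr0 : 0 ≤ ∫ x, g x ^ r ∂μ := integral_nonneg fun x => Real.rpow_nonneg (hg0 x) _
  have hI20 : 0 ≤ ∫ x, g x ^ (2:ℝ) ∂μ := integral_nonneg fun x => Real.rpow_nonneg (hg0 x) _
  rcases eq_or_lt_of_le (hs2.trans hr) with hsr | hsr
  · -- s = r, hence s = 2 = r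
    subst hsr
    have h2 : s = 2 := le_antisymm hs2 hr
    subst h2
    exact le_add_of_nonneg_right (Real.rpow_nonneg hIr0 _)
  · have hrs : 0 < r - s := by linarith
    set lam : ℝ := (r - 2) / (r - s) with hlam
    have hlam0 : 0 ≤ lam := div_nonneg (by linarith) hrs.le
    have hlam1 : lam ≤ 1 := (div_le_one hrs).mpr (by linarith)
    have hq0 : 0 ≤ 1 - lam := by linarith
    have hsum : s * lam + r * (1 - lam) = 2 := by
      rw [hlam]; field_simp; ring
    -- Hölder via lintegral
    have hms : AEMeasurable (fun x => ENNReal.ofReal (g x ^ s)) μ :=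
      hIs.aestronglyMeasurable.aemeasurable.ennreal_ofReal
    have hmr : AEMeasurable (fun x => ENNReal.ofReal (g x ^ r)) μ :=
      hIr.aestronglyMeasurable.aemeasurable.ennreal_ofReal
    have hH := ENNReal.lintegral_mul_norm_pow_le (μ := μ) hms hmr hlam0 hq0 (by ring)
    have hptw : ∀ x, (ENNReal.ofReal (g x ^ s)) ^ lam * (ENNReal.ofReal (g x ^ r)) ^ (1 - lam)
        = ENNReal.ofReal (g x ^ (2:ℝ)) := by
      intro x
      rw [ENNReal.ofReal_rpow_of_nonneg (Real.rpow_nonneg (hg0 x) _) hlam0,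
        ENNReal.ofReal_rpow_of_nonneg (Real.rpow_nonneg (hg0 x) _) hq0,
        ← ENNReal.ofReal_mul (Real.rpow_nonneg (Real.rpow_nonneg (hg0 x) _) _),
        ← Real.rpow_mul (hg0 x), ← Real.rpow_mul (hg0 x),
        ← Real.rpow_add' (hg0 x) (by rw [hsum]; norm_num), hsum]
    have hL : ∫⁻ x, (ENNReal.ofReal (g x ^ s)) ^ lam * (ENNReal.ofReal (g x ^ r)) ^ (1 - lam) ∂μ
        = ENNReal.ofReal (∫ x, g x ^ (2:ℝ) ∂μ) := by
      rw [ofReal_integral_eq_lintegral_ofReal hI2 (ae_of_all _ fun x => Real.rpow_nonneg (hg0 x) _)]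
      exact lintegral_congr fun x => hptw x
    rw [hL, ← ofReal_integral_eq_lintegral_ofReal hIs
        (ae_of_all _ fun x => Real.rpow_nonneg (hg0 x) _),
      ← ofReal_integral_eq_lintegral_ofReal hIr
        (ae_of_all _ fun x => Real.rpow_nonneg (hg0 x) _),
      ENNReal.ofReal_rpow_of_nonneg hIs0 hlam0, ENNReal.ofReal_rpow_of_nonneg hIr0 hq0,
      ← ENNReal.ofReal_mul (Real.rpow_nonneg hIs0 _)] at hH
    have hHr : (∫ x, g x ^ (2:ℝ) ∂μ) ≤
        (∫ x, g x ^ s ∂μ) ^ lam * (∫ x, g x ^ r ∂μ) ^ (1 - lam) :=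
      (ENNReal.ofReal_le_ofReal_iff
        (mul_nonneg (Real.rpow_nonneg hIs0 _) (Real.rpow_nonneg hIr0 _))).mp hH
    set Is := ∫ x, g x ^ s ∂μ
    set Ir := ∫ x, g x ^ r ∂μ
    calc (∫ x, g x ^ (2:ℝ) ∂μ) ^ (1/(2:ℝ))
        ≤ (Is ^ lam * Ir ^ (1 - lam)) ^ (1/(2:ℝ)) :=
          Real.rpow_le_rpow hI20 hHr (by norm_num)
      _ = (Is ^ (1/s)) ^ (s * lam / 2) * (Ir ^ (1/r)) ^ (r * (1 - lam) / 2) := by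
          rw [Real.mul_rpow (Real.rpow_nonneg hIs0 _) (Real.rpow_nonneg hIr0 _),
            ← Real.rpow_mul hIs0, ← Real.rpow_mul hIr0,
            ← Real.rpow_mul hIs0, ← Real.rpow_mul hIr0]
          rw [show (1:ℝ)/s * (s * lam / 2) = lam * (1/2) by field_simp,
            show (1:ℝ)/r * (r * (1 - lam) / 2) = (1 - lam) * (1/2) by field_simp]
      _ ≤ (s * lam / 2) * Is ^ (1/s) + (r * (1 - lam) / 2) * Ir ^ (1/r) :=
          Real.geom_mean_le_arith_mean2_weighted
            (by positivity) (by positivity)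
            (Real.rpow_nonneg hIs0 _) (Real.rpow_nonneg hIr0 _) (by linarith)
      _ ≤ Is ^ (1/s) + Ir ^ (1/r) := by
          have hw1 : s * lam / 2 ≤ 1 := by
            nlinarith [mul_nonneg (by linarith : (0:ℝ) ≤ r) hq0]
          have hw2 : r * (1 - lam) / 2 ≤ 1 := by nlinarith [mul_nonneg hs0.le hlam0, hsum]
          have := Real.rpow_nonneg hIs0 (1/s)
          have := Real.rpow_nonneg hIr0 (1/r)
          nlinarith

theorem GNS_with_Ls_norm_on_rhs {N : ℕ}
    (Ω : Set (EuclideanSpace ℝ (Fin N))) (hΩmeas : MeasurableSet Ω)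
    (CS r s θ : ℝ) (hCS : 0 < CS) (hs0 : 0 < s) (hs2 : s ≤ 2) (hr : 2 ≤ r)
    (hθ0 : 0 < θ) (hθ1 : θ < 1)
    (hGNS : ∀ f : EuclideanSpace ℝ (Fin N) → ℝ, MemH1LsOn Ω s f →
      lpNormOn Ω r f ≤ CS * (gradNormOn Ω f + lpNormOn Ω 2 f) ^ θ * (lpNormOn Ω s f) ^ (1 - θ)) :
    ∃ CS' : ℝ, 0 < CS' ∧
      ∀ f : EuclideanSpace ℝ (Fin N) → ℝ, MemH1LsOn Ω s f →
        lpNormOn Ω r f ≤ CS' * (gradNormOn Ω f + lpNormOn Ω s f) ^ θ * (lpNormOn Ω s f) ^ (1 - θ) := by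
  have hθ1' : 0 < 1 - θ := by linarith
  set ε : ℝ := 1 / (2 * CS * θ) with hε
  have hεpos : 0 < ε := by positivity
  set δ : ℝ := ε ^ (-(θ / (1 - θ))) with hδ
  have hδpos : 0 < δ := Real.rpow_pos_of_pos hεpos _
  set K : ℝ := CS * (1 - θ) * δ with hK
  have hKpos : 0 < K := by positivity
  refine ⟨2 * CS + 2 * K, by positivity, fun f hf => ?_⟩
  obtain ⟨hdiff, hint1, hint2, hintg, hints⟩ := hf
  have habs2 : ∀ y : ℝ, y ^ (2:ℝ) = |y| ^ (2:ℝ) := fun y => by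
    rw [show (2:ℝ) = ((2:ℕ):ℝ) by norm_num, Real.rpow_natCast, Real.rpow_natCast, sq_abs]
  have hint2' : IntegrableOn (fun x => |f x| ^ (2:ℝ)) Ω volume :=
    hint2.congr (ae_of_all _ fun x => habs2 (f x))
  have hIs0 : 0 ≤ ∫ x in Ω, |f x| ^ s :=
    integral_nonneg fun x => Real.rpow_nonneg (abs_nonneg _) _
  have hIr0 : 0 ≤ ∫ x in Ω, |f x| ^ r :=
    integral_nonneg fun x => Real.rpow_nonneg (abs_nonneg _) _
  have hI20 : 0 ≤ ∫ x in Ω, |f x| ^ (2:ℝ) :=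
    integral_nonneg fun x => Real.rpow_nonneg (abs_nonneg _) _
  have hG0 : 0 ≤ gradNormOn Ω f :=
    Real.rpow_nonneg (integral_nonneg fun x => Real.rpow_nonneg (norm_nonneg _) _) _
  set G := gradNormOn Ω f with hGdef
  have hRdef : lpNormOn Ω r f = (∫ x in Ω, |f x| ^ r) ^ (1/r) := rfl
  have hBdef : lpNormOn Ω s f = (∫ x in Ω, |f x| ^ s) ^ (1/s) := rfl
  have hTdef : lpNormOn Ω 2 f = (∫ x in Ω, |f x| ^ (2:ℝ)) ^ (1/(2:ℝ)) := rfl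
  set R := lpNormOn Ω r f with hRv
  set B := lpNormOn Ω s f with hBv
  set T := lpNormOn Ω 2 f with hTv
  have hB0 : 0 ≤ B := by rw [hBdef]; exact Real.rpow_nonneg hIs0 _
  have hR0 : 0 ≤ R := by rw [hRdef]; exact Real.rpow_nonneg hIr0 _
  have hT0 : 0 ≤ T := by rw [hTdef]; exact Real.rpow_nonneg hI20 _
  have hGB : 0 ≤ G + B := by linarith
  by_cases hintr : IntegrableOn (fun x => |f x| ^ r) Ω volume
  · -- main case
    have hTBR : T ≤ B + R := by
      rw [hTdef, hBdef, hRdef]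
      exact interp_aux (g := fun x => |f x|) (fun x => abs_nonneg _) hs0 hs2 hr hints hintr hint2'
    have hmain : R ≤ CS * (G + T) ^ θ * B ^ (1 - θ) :=
      hGNS f ⟨hdiff, hint1, hint2, hintg, hints⟩
    have h1 : (G + T) ^ θ ≤ (G + B) ^ θ + R ^ θ := by
      calc (G + T) ^ θ ≤ ((G + B) + R) ^ θ :=
            Real.rpow_le_rpow (by linarith [hT0]) (by linarith) hθ0.le
        _ ≤ (G + B) ^ θ + R ^ θ := rpow_add_le_add_rpow_real hGB hR0 hθ0.le hθ1.le
    have h2 : R ≤ CS * ((G + B) ^ θ + R ^ θ) * B ^ (1 - θ) :=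
      hmain.trans (mul_le_mul_of_nonneg_right
        (mul_le_mul_of_nonneg_left h1 hCS.le) (Real.rpow_nonneg hB0 _))
    -- Young's inequality to absorb R ^ θ
    have hεδ : ε ^ θ * δ ^ (1 - θ) = 1 := by
      rw [hδ, ← Real.rpow_mul hεpos.le, ← Real.rpow_add hεpos,
        show θ + -(θ / (1 - θ)) * (1 - θ) = 0 by (field_simp; ring), Real.rpow_zero]
    have hY : R ^ θ * B ^ (1 - θ) ≤ θ * (ε * R) + (1 - θ) * (δ * B) := by
      have h3 : (ε * R) ^ θ * (δ * B) ^ (1 - θ) = (ε ^ θ * δ ^ (1 - θ)) * (R ^ θ * B ^ (1 - θ)) := by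
        rw [Real.mul_rpow hεpos.le hR0, Real.mul_rpow hδpos.le hB0]; ring
      have h4 := Real.geom_mean_le_arith_mean2_weighted hθ0.le hθ1'.le
        (mul_nonneg hεpos.le hR0) (mul_nonneg hδpos.le hB0) (by ring)
      rw [h3, hεδ, one_mul] at h4
      exact h4
    have hCSθε : CS * θ * ε = 1 / 2 := by
      rw [hε]; field_simp
    have h5 : CS * (R ^ θ * B ^ (1 - θ)) ≤ (1/2) * R + K * B := by
      calc CS * (R ^ θ * B ^ (1 - θ)) ≤ CS * (θ * (ε * R) + (1 - θ) * (δ * B)) :=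
            mul_le_mul_of_nonneg_left hY hCS.le
        _ = (CS * θ * ε) * R + K * B := by rw [hK]; ring
        _ = (1/2) * R + K * B := by rw [hCSθε]
    have hBsplit : B = B ^ θ * B ^ (1 - θ) := by
      have h6 := Real.rpow_add' hB0 (y := θ) (z := 1 - θ) (ne_of_eq_of_ne (by ring) one_ne_zero)
      rw [show θ + (1 - θ) = (1:ℝ) by ring, Real.rpow_one] at h6
      exact h6
    have hBle : B ≤ (G + B) ^ θ * B ^ (1 - θ) :=
      calc B = B ^ θ * B ^ (1 - θ) := hBsplit
        _ ≤ (G + B) ^ θ * B ^ (1 - θ) := mul_le_mul_of_nonneg_right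
            (Real.rpow_le_rpow hB0 (le_add_of_nonneg_left hG0) hθ0.le)
            (Real.rpow_nonneg hB0 _)
    set X := (G + B) ^ θ * B ^ (1 - θ) with hX
    have hX0 : 0 ≤ X := mul_nonneg (Real.rpow_nonneg hGB _) (Real.rpow_nonneg hB0 _)
    have h7 : R ≤ CS * X + ((1/2) * R + K * B) := by
      calc R ≤ CS * ((G + B) ^ θ + R ^ θ) * B ^ (1 - θ) := h2
        _ = CS * X + CS * (R ^ θ * B ^ (1 - θ)) := by rw [hX]; ring
        _ ≤ CS * X + ((1/2) * R + K * B) := by linarith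
    have h8 : K * B ≤ K * X := mul_le_mul_of_nonneg_left hBle hKpos.le
    have hgoal : (2 * CS + 2 * K) * (G + B) ^ θ * B ^ (1 - θ) = (2 * CS + 2 * K) * X := by
      rw [hX]; ring
    rw [hgoal]
    linarith
  · -- degenerate case : |f|^r is not integrable, so the L^r norm is 0
    have hzero : (∫ x in Ω, |f x| ^ r) = 0 := integral_undef hintr
    have hRzero : R = 0 := by
      rw [hRdef, hzero, Real.zero_rpow (by positivity : (1:ℝ)/r ≠ 0)]
    rw [hRzero]
    exact mul_nonneg (mul_nonneg (by positivity) (Real.rpow_nonneg hGB _))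
      (Real.rpow_nonneg hB0 _)
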